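/- Let R be a commutative ℚ-algebra, A(t) ∈ R[[t]] any power series, and B(t) ∈ R[[t]] a power series with zero constant term. Define polynomials s_k(X) ∈ R[X] by the identity Σ_{k≥0} s_k(X) t^k/k! = A(t)·exp(X·B(t)) in (R[X])[[t]], and let W_B ∈ tR[[t]] be the unique power series with W_B(t·exp(B(t))) = t. Then in (R[X])[[t]]: Σ_{k≥0} s_k(X − k) t^k/k! = (A(W_B(t)) / (1 + W_B(t)·B'(W_B(t)))) · exp(X·B(W_B(t))), where s_k(X − k) is the composition of s_k with X − k, B' is the formal derivative of B, and the power series 1 + W_B(t)·B'(W_B(t)) is invertible in R[[t]] because its constant term is 1. -/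

import Mathlib

noncomputable def substPS {R : Type*} [CommRing R] (a f : PowerSeries R) : PowerSeries R :=
  PowerSeries.mk fun n => ∑ᶠ (k : ℕ), PowerSeries.coeff (R := R) k f * PowerSeries.coeff (R := R) n (a ^ k)

namespace StmtAux

open PowerSeries Finset

variable {S : Type*} [CommRing S]

lemma coeff_pow_eq_zero' {a : S⟦X⟧} (ha : constantCoeff (R := S) a = 0) {n k : ℕ} (h : n < k) :
    coeff (R := S) n (a ^ k) = 0 := by
  obtain ⟨c, rfl⟩ := X_dvd_iff.mpr ha
  rw [mul_pow, coeff_X_pow_mul']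
  rw [if_neg (by omega)]

lemma coeff_substPS {a : S⟦X⟧} (ha : constantCoeff (R := S) a = 0) (f : S⟦X⟧) (n : ℕ) :
    coeff (R := S) n (substPS a f) = ∑ j ∈ range (n + 1), coeff (R := S) j f * coeff (R := S) n (a ^ j) := by
  rw [substPS, coeff_mk]
  apply finsum_eq_sum_of_support_subset
  intro j hj
  simp only [Function.mem_support, ne_eq] at hj
  simp only [coe_range, Set.mem_Iio]
  by_contra h
  push_neg at h
  exact hj (by rw [coeff_pow_eq_zero' ha (by omega), mul_zero])

lemma constantCoeff_substPS {a : S⟦X⟧} (ha : constantCoeff (R := S) a = 0) (f : S⟦X⟧) :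
    constantCoeff (R := S) (substPS a f) = constantCoeff (R := S) f := by
  rw [← coeff_zero_eq_constantCoeff_apply, coeff_substPS ha, ← coeff_zero_eq_constantCoeff_apply]
  simp

lemma substPS_map {T : Type*} [CommRing T] (φ : S →+* T) {a : S⟦X⟧}
    (ha : constantCoeff (R := S) a = 0) (f : S⟦X⟧) :
    PowerSeries.map φ (substPS a f) = substPS (PowerSeries.map φ a) (PowerSeries.map φ f) := by
  have ha' : constantCoeff (R := T) (PowerSeries.map φ a) = 0 := by
    rw [← coeff_zero_eq_constantCoeff_apply, coeff_map, coeff_zero_eq_constantCoeff_apply, ha,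
      map_zero]
  ext n
  rw [coeff_map, coeff_substPS ha, coeff_substPS ha', map_sum]
  refine sum_congr rfl fun j _ => ?_
  rw [map_mul, coeff_map, ← map_pow, coeff_map]

lemma substPS_C {a : S⟦X⟧} (ha : constantCoeff (R := S) a = 0) (c : S) :
    substPS a (C (R := S) c) = C (R := S) c := by
  ext n
  rw [coeff_substPS ha, sum_eq_single 0]
  · simp [coeff_one, coeff_C]
  · intro j _ hj; rw [coeff_C, if_neg hj, zero_mul]
  · intro h; simp at h

lemma substPS_X {a : S⟦X⟧} (ha : constantCoeff (R := S) a = 0) : substPS a X = a := by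
  ext n
  rw [coeff_substPS ha]
  rw [sum_eq_single 1]
  · simp
  · intro j _ hj; rw [coeff_X, if_neg hj, zero_mul]
  · intro h
    simp only [mem_range, not_lt] at h
    have hn : n = 0 := by omega
    subst hn
    simp [coeff_zero_eq_constantCoeff_apply, ha]

lemma substPS_id (f : S⟦X⟧) : substPS X f = f := by
  ext n
  rw [coeff_substPS (by simp) f]
  rw [sum_eq_single n]
  · simp
  · intro j hj hjn; rw [coeff_X_pow, if_neg (Ne.symm hjn), mul_zero]
  · intro h; simp at h

lemma substPS_add {a : S⟦X⟧} (ha : constantCoeff (R := S) a = 0) (f g : S⟦X⟧) :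
    substPS a (f + g) = substPS a f + substPS a g := by
  ext n
  rw [map_add, coeff_substPS ha, coeff_substPS ha, coeff_substPS ha, ← sum_add_distrib]
  refine sum_congr rfl fun j _ => ?_
  rw [map_add, add_mul]

lemma triangle_square {M : Type*} [AddCommMonoid M] (N : ℕ) (u : ℕ → ℕ → M)
    (hu : ∀ i j, N ≤ i + j → u i j = 0) :
    ∑ m ∈ range N, ∑ ij ∈ antidiagonal m, u ij.1 ij.2
      = ∑ i ∈ range N, ∑ j ∈ range N, u i j := by
  have h1 : ∑ i ∈ range N, ∑ j ∈ range N, u i j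
      = ∑ p ∈ range N ×ˢ range N, u p.1 p.2 := by
    rw [Finset.sum_product]
  set s : Finset (ℕ × ℕ) := (range N ×ˢ range N).filter (fun p => p.1 + p.2 < N) with hs
  have h2 : ∑ p ∈ range N ×ˢ range N, u p.1 p.2 = ∑ p ∈ s, u p.1 p.2 := by
    refine (Finset.sum_subset (filter_subset _ _) fun p hp hnp => ?_).symm
    refine hu p.1 p.2 ?_
    by_contra h
    exact hnp (mem_filter.mpr ⟨hp, by omega⟩)
  have h3 : ∀ m ∈ range N, (s.filter fun p => p.1 + p.2 = m) = antidiagonal m := by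
    intro m hm
    ext p
    simp only [mem_filter, mem_range, Finset.HasAntidiagonal.mem_antidiagonal, mem_product, hs]
    simp only [mem_range] at hm
    constructor
    · rintro ⟨_, h⟩; exact h
    · intro h
      exact ⟨⟨⟨by omega, by omega⟩, by omega⟩, h⟩
  have h4 := Finset.sum_fiberwise_of_maps_to (s := s) (t := range N)
    (g := fun p : ℕ × ℕ => p.1 + p.2) (f := fun p : ℕ × ℕ => u p.1 p.2)
    (fun p hp => by simp only [hs, mem_filter, mem_range] at hp ⊢; omega)
  rw [h1, h2, ← h4]
  refine sum_congr rfl fun m hm => ?_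
  rw [h3 m hm]


lemma coeff_substPS_le {a : S⟦X⟧} (ha : constantCoeff (R := S) a = 0) (f : S⟦X⟧) {p n : ℕ}
    (h : p ≤ n) :
    coeff (R := S) p (substPS a f) = ∑ j ∈ range (n + 1), coeff (R := S) j f * coeff (R := S) p (a ^ j) := by
  rw [coeff_substPS ha]
  refine Finset.sum_subset (by apply range_subset_range.mpr; omega) fun j hj hj' => ?_
  simp only [mem_range] at hj hj'
  rw [coeff_pow_eq_zero' ha (by omega), mul_zero]

lemma substPS_mul {a : S⟦X⟧} (ha : constantCoeff (R := S) a = 0) (f g : S⟦X⟧) :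
    substPS a (f * g) = substPS a f * substPS a g := by
  ext n
  have hu : ∀ i j : ℕ, n + 1 ≤ i + j →
      coeff (R := S) i f * coeff (R := S) j g * coeff (R := S) n (a ^ (i + j)) = 0 := fun i j h => by
    rw [coeff_pow_eq_zero' ha (by omega), mul_zero]
  have e1 : ∀ p ∈ antidiagonal n,
      coeff (R := S) p.1 (substPS a f) * coeff (R := S) p.2 (substPS a g)
      = ∑ i ∈ range (n + 1), ∑ j ∈ range (n + 1),
          coeff (R := S) i f * coeff (R := S) p.1 (a ^ i) * (coeff (R := S) j g * coeff (R := S) p.2 (a ^ j)) := by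
    intro p hp
    have hp' := Finset.HasAntidiagonal.mem_antidiagonal.mp hp
    rw [coeff_substPS_le ha f (show p.1 ≤ n by omega),
        coeff_substPS_le ha g (show p.2 ≤ n by omega), sum_mul_sum]
  have hR : coeff (R := S) n (substPS a f * substPS a g)
      = ∑ i ∈ range (n + 1), ∑ j ∈ range (n + 1),
          coeff (R := S) i f * coeff (R := S) j g * coeff (R := S) n (a ^ (i + j)) := by
    rw [coeff_mul, sum_congr rfl e1, Finset.sum_comm]
    refine sum_congr rfl fun i _ => ?_
    rw [Finset.sum_comm]
    refine sum_congr rfl fun j _ => ?_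
    rw [pow_add, coeff_mul, Finset.mul_sum]
    exact sum_congr rfl fun p _ => by ring
  rw [hR, coeff_substPS ha, ← triangle_square (n + 1) _ hu]
  refine sum_congr rfl fun m hm => ?_
  rw [coeff_mul, sum_mul]
  refine sum_congr rfl fun ij hij => ?_
  rw [Finset.HasAntidiagonal.mem_antidiagonal.mp hij]

lemma substPS_pow {a : S⟦X⟧} (ha : constantCoeff (R := S) a = 0) (f : S⟦X⟧) (m : ℕ) :
    substPS a (f ^ m) = substPS a f ^ m := by
  induction m with
  | zero => simpa [pow_zero] using (by
      have := coeff_substPS (S := S) ha 1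
      ext n
      rw [coeff_substPS ha, sum_eq_single 0]
      · simp
      · intro j _ hj; rw [coeff_one, if_neg hj, zero_mul]
      · intro h; simp at h)
  | succ m ih => rw [pow_succ, pow_succ, substPS_mul ha, ih]

lemma substPS_one {a : S⟦X⟧} (ha : constantCoeff (R := S) a = 0) : substPS a 1 = 1 := by
  simpa using substPS_pow ha 1 0

lemma substPS_assoc {a b : S⟦X⟧} (ha : constantCoeff (R := S) a = 0) (hb : constantCoeff (R := S) b = 0)
    (f : S⟦X⟧) :
    substPS b (substPS a f) = substPS (substPS b a) f := by
  have hc : constantCoeff (R := S) (substPS b a) = 0 := by rw [constantCoeff_substPS hb a, ha]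
  ext n
  rw [coeff_substPS hb, coeff_substPS hc]
  calc ∑ k ∈ range (n + 1), coeff (R := S) k (substPS a f) * coeff (R := S) n (b ^ k)
      = ∑ k ∈ range (n + 1), ∑ m ∈ range (n + 1),
          coeff (R := S) m f * coeff (R := S) k (a ^ m) * coeff (R := S) n (b ^ k) := by
        refine sum_congr rfl fun k hk => ?_
        simp only [mem_range] at hk
        rw [coeff_substPS_le ha f (show k ≤ n by omega), sum_mul]
    _ = ∑ m ∈ range (n + 1), coeff (R := S) m f * coeff (R := S) n (substPS b a ^ m) := by
        rw [Finset.sum_comm]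
        refine sum_congr rfl fun m _ => ?_
        rw [← substPS_pow hb, coeff_substPS hb, Finset.mul_sum]
        exact sum_congr rfl fun k _ => by ring



lemma substPS_zero (f : S⟦X⟧) : substPS 0 f = C (R := S) (constantCoeff (R := S) f) := by
  ext n
  rw [coeff_substPS (by simp) f, sum_eq_single 0]
  · simp [coeff_one, coeff_C, coeff_zero_eq_constantCoeff_apply]
  · intro j _ hj
    rw [zero_pow hj, map_zero, mul_zero]
  · intro h; simp at h

lemma mul_eq_one_unique {x y z : S} (h1 : x * y = 1) (h2 : x * z = 1) : y = z := by
  calc y = y * (x * z) := by rw [h2, mul_one]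
    _ = (x * y) * z := by ring
    _ = z := by rw [h1, one_mul]

lemma nat_cancel [Algebra ℚ S] {x y : S} {n : ℕ} (hn : n ≠ 0)
    (h : (n : S) * x = (n : S) * y) : x = y := by
  have h1 : ((n : ℚ) • x : S) = (n : ℚ) • y := by
    rw [Algebra.smul_def, Algebra.smul_def, map_natCast]; exact h
  calc x = (n : ℚ)⁻¹ • ((n : ℚ) • x) := by
        rw [smul_smul, inv_mul_cancel₀ (by exact_mod_cast hn), one_smul]
    _ = (n : ℚ)⁻¹ • ((n : ℚ) • y) := by rw [h1]
    _ = y := by rw [smul_smul, inv_mul_cancel₀ (by exact_mod_cast hn), one_smul]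

lemma coeff_derivativeFun' (f : S⟦X⟧) (n : ℕ) :
    coeff (R := S) n (derivativeFun f) = coeff (R := S) (n + 1) f * (n + 1) :=
  coeff_derivative f n

lemma derivativeFun_pow (f : S⟦X⟧) (m : ℕ) :
    derivativeFun (f ^ (m + 1)) = (m + 1) • (f ^ m * derivativeFun f) := by
  induction m with
  | zero => simp
  | succ m ih =>
    rw [pow_succ, derivativeFun_mul, ih]
    simp only [smul_eq_mul]
    rw [mul_smul_comm]
    have h1 : f * (f ^ m * derivativeFun f) = f ^ (m + 1) * derivativeFun f := by ring
    rw [h1]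
    conv_rhs => rw [succ_nsmul]
    rw [add_comm]

lemma substPS_exp_deriv [Algebra ℚ S] {B : S⟦X⟧} (hB : constantCoeff (R := S) B = 0) :
    derivativeFun (substPS B (exp S)) = derivativeFun B * substPS B (exp S) := by
  ext n
  rw [coeff_derivativeFun', coeff_substPS hB, sum_mul]
  have step1 : ∀ j ∈ range (n + 1 + 1),
      coeff (R := S) j (exp S) * coeff (R := S) (n + 1) (B ^ j) * ((n : S) + 1)
      = coeff (R := S) j (exp S) * coeff (R := S) n (derivativeFun (B ^ j)) := by
    intro j _
    rw [mul_assoc, coeff_derivativeFun']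
  rw [sum_congr rfl step1, Finset.sum_range_succ']
  have h0 : coeff (R := S) 0 (exp S) * coeff (R := S) n (derivativeFun ((B : S⟦X⟧) ^ 0)) = 0 := by
    rw [pow_zero, derivativeFun_one, map_zero, mul_zero]
  rw [h0, add_zero]
  have step2 : ∀ i ∈ range (n + 1),
      coeff (R := S) (i + 1) (exp S) * coeff (R := S) n (derivativeFun (B ^ (i + 1)))
      = coeff (R := S) i (exp S) * coeff (R := S) n (derivativeFun B * B ^ i) := by
    intro i _
    rw [derivativeFun_pow, map_nsmul, nsmul_eq_mul, coeff_exp, coeff_exp,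
      mul_comm (derivativeFun B) (B ^ i), ← mul_assoc]
    congr 1
    rw [← map_natCast (algebraMap ℚ S) (i + 1), ← map_mul]
    congr 1
    have h1 : ((Nat.factorial i : ℚ)) ≠ 0 := by exact_mod_cast i.factorial_ne_zero
    have h2 : ((i : ℚ) + 1) ≠ 0 := by positivity
    rw [Nat.factorial_succ]
    push_cast
    field_simp
  rw [sum_congr rfl step2, coeff_mul]
  have e1 : ∀ p ∈ antidiagonal n,
      coeff (R := S) p.1 (derivativeFun B) * coeff (R := S) p.2 (substPS B (exp S))
      = ∑ i ∈ range (n + 1),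
          coeff (R := S) i (exp S) * (coeff (R := S) p.1 (derivativeFun B) * coeff (R := S) p.2 (B ^ i)) := by
    intro p hp
    have hp' := Finset.HasAntidiagonal.mem_antidiagonal.mp hp
    rw [coeff_substPS_le hB (exp S) (show p.2 ≤ n by omega), Finset.mul_sum]
    exact sum_congr rfl fun i _ => by ring
  rw [sum_congr rfl e1, Finset.sum_comm]
  refine sum_congr rfl fun i _ => ?_
  rw [coeff_mul, Finset.mul_sum]


lemma ode_unique [Algebra ℚ S] {c u v : S⟦X⟧} (hu : derivativeFun u = c * u)
    (hv : derivativeFun v = c * v) (h0 : constantCoeff (R := S) u = constantCoeff (R := S) v) : u = v := by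
  ext n
  induction n using Nat.strong_induction_on with
  | _ n ih =>
    match n with
    | 0 => simpa [coeff_zero_eq_constantCoeff_apply] using h0
    | (m + 1) =>
      refine nat_cancel (n := m + 1) (by omega) ?_
      have key : coeff (R := S) m (derivativeFun u) = coeff (R := S) m (derivativeFun v) := by
        rw [hu, hv, coeff_mul, coeff_mul]
        refine Finset.sum_congr rfl fun p hp => ?_
        have hp' := Finset.HasAntidiagonal.mem_antidiagonal.mp hp
        rw [ih p.2 (by omega)]
      rw [coeff_derivativeFun', coeff_derivativeFun'] at key
      push_cast
      calc ((m : S) + 1) * coeff (R := S) (m + 1) u = coeff (R := S) (m + 1) u * ((m : S) + 1) := by ring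
        _ = coeff (R := S) (m + 1) v * ((m : S) + 1) := by exact_mod_cast key
        _ = ((m : S) + 1) * coeff (R := S) (m + 1) v := by ring

lemma constantCoeff_substPS_exp [Algebra ℚ S] {f : S⟦X⟧} (hf : constantCoeff (R := S) f = 0) :
    constantCoeff (R := S) (substPS f (exp S)) = 1 := by
  rw [constantCoeff_substPS hf, constantCoeff_exp]

lemma substPS_exp_add [Algebra ℚ S] {f g : S⟦X⟧} (hf : constantCoeff (R := S) f = 0)
    (hg : constantCoeff (R := S) g = 0) :
    substPS (f + g) (exp S) = substPS f (exp S) * substPS g (exp S) := by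
  have hfg : constantCoeff (R := S) (f + g) = 0 := by rw [map_add, hf, hg, add_zero]
  refine ode_unique (c := derivativeFun f + derivativeFun g) ?_ ?_ ?_
  · rw [substPS_exp_deriv hfg, derivativeFun_add]
  · rw [derivativeFun_mul, substPS_exp_deriv hf, substPS_exp_deriv hg, smul_eq_mul, smul_eq_mul]
    ring
  · rw [constantCoeff_substPS_exp hfg, map_mul, constantCoeff_substPS_exp hf,
      constantCoeff_substPS_exp hg, mul_one]

lemma substPS_natmul_exp [Algebra ℚ S] {B : S⟦X⟧} (hB : constantCoeff (R := S) B = 0) (m : ℕ) :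
    substPS (C (R := S) (m : S) * B) (exp S) = substPS B (exp S) ^ m := by
  induction m with
  | zero =>
    rw [Nat.cast_zero, map_zero, zero_mul, substPS_zero, constantCoeff_exp, map_one, pow_zero]
  | succ m ih =>
    have h1 : C (R := S) ((m + 1 : ℕ) : S) * B = C (R := S) (m : S) * B + C (R := S) 1 * B := by
      push_cast
      rw [map_add]
      ring
    have hc : ∀ r : S, constantCoeff (R := S) (C (R := S) r * B) = 0 := fun r => by
      rw [map_mul, constantCoeff_C, hB, mul_zero]
    rw [h1, substPS_exp_add (hc _) (hc _), ih, map_one, one_mul, pow_succ]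

lemma substPS_negmul_exp [Algebra ℚ S] {B : S⟦X⟧} (hB : constantCoeff (R := S) B = 0) (m : ℕ) :
    substPS (C (R := S) (-(m : S)) * B) (exp S) * substPS B (exp S) ^ m = 1 := by
  have hc : ∀ r : S, constantCoeff (R := S) (C (R := S) r * B) = 0 := fun r => by
    rw [map_mul, constantCoeff_C, hB, mul_zero]
  rw [← substPS_natmul_exp hB m, ← substPS_exp_add (hc _) (hc _)]
  have h1 : C (R := S) (-(m : S)) * B + C (R := S) ((m : ℕ) : S) * B = 0 := by
    rw [← add_mul, ← map_add, neg_add_cancel, map_zero, zero_mul]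
  rw [h1, substPS_zero, constantCoeff_exp, map_one]


lemma derivativeFun_X : derivativeFun (X : S⟦X⟧) = 1 := by
  ext n
  rw [coeff_derivativeFun', coeff_X, coeff_one]
  rcases Nat.eq_zero_or_pos n with rfl | hn
  · simp
  · rw [if_neg (by omega), if_neg (by omega), zero_mul]

lemma key_lagrange [Algebra ℚ S] {B : S⟦X⟧} (hB : constantCoeff (R := S) B = 0) (P : S⟦X⟧) (k : ℕ) :
    coeff (R := S) k P = coeff (R := S) k (substPS (X * substPS B (exp S)) P *
      (derivativeFun (X * substPS B (exp S)) * invOfUnit (substPS B (exp S)) 1 ^ (k + 1))) := by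
  set E : S⟦X⟧ := substPS B (exp S) with hEdef
  set V : S⟦X⟧ := invOfUnit E 1 with hVdef
  set F : S⟦X⟧ := X * E with hFdef
  have hE1 : constantCoeff (R := S) E = 1 := constantCoeff_substPS_exp hB
  have hEV : E * V = 1 := mul_invOfUnit E 1 (by rw [hE1, Units.val_one])
  have hF0 : constantCoeff (R := S) F = 0 := by
    rw [hFdef, map_mul, constantCoeff_X, zero_mul]
  have hE' : derivativeFun E = derivativeFun B * E := substPS_exp_deriv hB
  have hV' : derivativeFun V = -(derivativeFun B * V) := by
    have h0 := derivativeFun_mul E V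
    rw [hEV, derivativeFun_one, hE'] at h0
    simp only [smul_eq_mul] at h0
    linear_combination (-V) * h0 - (derivativeFun V + derivativeFun B * V) * hEV
  have hF' : derivativeFun F = E * (1 + X * derivativeFun B) := by
    rw [hFdef, derivativeFun_mul, smul_eq_mul, smul_eq_mul, hE', derivativeFun_X, mul_one]
    ring
  set G : S⟦X⟧ := derivativeFun F * V ^ (k + 1) with hGdef
  have expand : coeff (R := S) k (substPS F P * G)
      = ∑ m ∈ range (k + 1), coeff (R := S) m P * coeff (R := S) k (F ^ m * G) := by
    rw [coeff_mul]
    have e1 : ∀ p ∈ antidiagonal k,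
        coeff (R := S) p.1 (substPS F P) * coeff (R := S) p.2 G
        = ∑ m ∈ range (k + 1), coeff (R := S) m P * (coeff (R := S) p.1 (F ^ m) * coeff (R := S) p.2 G) := by
      intro p hp
      have hp' := Finset.HasAntidiagonal.mem_antidiagonal.mp hp
      rw [coeff_substPS_le hF0 P (show p.1 ≤ k by omega), sum_mul]
      exact sum_congr rfl fun m _ => by ring
    rw [sum_congr rfl e1, Finset.sum_comm]
    refine sum_congr rfl fun m _ => ?_
    rw [coeff_mul, Finset.mul_sum]
  have diag : ∀ m ∈ range (k + 1), coeff (R := S) k (F ^ m * G) = if m = k then 1 else 0 := by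
    intro m hm
    have hmk : m ≤ k := by simp only [mem_range] at hm; omega
    have hsplit : V ^ (k + 1) = V ^ (m + 1) * V ^ (k - m) := by
      rw [← pow_add]
      congr 1
      omega
    have hform : F ^ m * G
        = X ^ m * ((1 + X * derivativeFun B) * V ^ (k - m)) * (E * V) ^ (m + 1) := by
      rw [hGdef, hF', hsplit, hFdef, mul_pow, mul_pow]
      ring
    rw [hform, hEV, one_pow, mul_one, coeff_X_pow_mul', if_pos hmk]
    rcases eq_or_lt_of_le hmk with rfl | hlt
    · rw [if_pos rfl, Nat.sub_self, pow_zero, mul_one]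
      simp [coeff_zero_eq_constantCoeff_apply]
    · rw [if_neg (by omega)]
      obtain ⟨i, hi⟩ : ∃ i, k - m = i + 1 := ⟨k - m - 1, by omega⟩
      rw [hi, add_mul, one_mul, map_add]
      have hXc : coeff (R := S) (i + 1) (X * (derivativeFun B * V ^ (i + 1)))
          = coeff (R := S) i (derivativeFun B * V ^ (i + 1)) := by
        rw [← pow_one (X : S⟦X⟧), coeff_X_pow_mul', if_pos (by omega)]
        norm_num
      have hVj : derivativeFun (V ^ (i + 1)) = -((i + 1) • (derivativeFun B * V ^ (i + 1))) := by
        rw [derivativeFun_pow, hV']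
        rw [show V ^ i * -(derivativeFun B * V) = -(derivativeFun B * V ^ (i + 1)) by
          rw [pow_succ]; ring]
        rw [smul_neg]
      have hco := congrArg (coeff (R := S) i) hVj
      rw [coeff_derivativeFun', map_neg, map_nsmul, nsmul_eq_mul] at hco
      have hcancel : coeff (R := S) (i + 1) (V ^ (i + 1))
          = -(coeff (R := S) i (derivativeFun B * V ^ (i + 1))) := by
        refine nat_cancel (n := i + 1) (by omega) ?_
        push_cast
        push_cast at hco
        calc ((i : S) + 1) * coeff (R := S) (i + 1) (V ^ (i + 1))
            = coeff (R := S) (i + 1) (V ^ (i + 1)) * ((i : S) + 1) := by ring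
          _ = -(((i : S) + 1) * coeff (R := S) i (derivativeFun B * V ^ (i + 1))) := hco
          _ = ((i : S) + 1) * -(coeff (R := S) i (derivativeFun B * V ^ (i + 1))) := by ring
      rw [mul_assoc, hXc, hcancel]
      ring
  rw [expand]
  have hsum : ∑ m ∈ range (k + 1), coeff (R := S) m P * coeff (R := S) k (F ^ m * G)
      = ∑ m ∈ range (k + 1), coeff (R := S) m P * (if m = k then 1 else 0) :=
    sum_congr rfl fun m hm => by rw [diag m hm]
  rw [hsum, sum_eq_single k]
  · rw [if_pos rfl, mul_one]
  · intro m _ hmk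
    rw [if_neg hmk, mul_zero]
  · intro h
    simp at h


lemma map_exp_of {T : Type*} [CommRing T] [Algebra ℚ S] [Algebra ℚ T] (φ : S →+* T)
    (hφ : ∀ q : ℚ, φ (algebraMap ℚ S q) = algebraMap ℚ T q) :
    PowerSeries.map φ (exp S) = exp T := by
  ext n
  rw [coeff_map, coeff_exp, coeff_exp, hφ]

lemma derivativeFun_map {T : Type*} [CommRing T] (φ : S →+* T) (f : S⟦X⟧) :
    derivativeFun (PowerSeries.map φ f) = PowerSeries.map φ (derivativeFun f) := by
  ext n
  rw [coeff_derivativeFun', coeff_map, coeff_map, coeff_derivativeFun', map_mul]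
  congr 1
  rw [show ((n : S) + 1) = ((n + 1 : ℕ) : S) by push_cast; ring, map_natCast]
  push_cast
  ring

end StmtAux





open PowerSeries StmtAux Finset in
/-- With Sheffer-type polynomials `s_k` defined by
`Σ_k s_k(X)·tᵏ/k! = A(t)·exp(X·B(t))` in `(R[X])[[t]]` and `W_B` the unique series with
`W_B(t·exp(B(t))) = t`, one has
`Σ_k s_k(X−k)·tᵏ/k! = (A(W_B(t))/(1 + W_B(t)·B'(W_B(t))))·exp(X·B(W_B(t)))`,
where the inverse of `1 + W_B(t)·B'(W_B(t))` (constant term `1`) is taken via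
`PowerSeries.invOfUnit` at the unit `1`. -/
theorem stmt_7 (R : Type*) [CommRing R] [Algebra ℚ R]
    (A : PowerSeries R)
    (B : PowerSeries R) (hB0 : PowerSeries.constantCoeff (R := R) B = 0)
    (s : ℕ → Polynomial R)
    (hs : ∀ k : ℕ,
      PowerSeries.coeff (R := Polynomial R) k
        (PowerSeries.map Polynomial.C A *
          substPS
            (PowerSeries.C (R := Polynomial R) Polynomial.X * PowerSeries.map Polynomial.C B)
            (PowerSeries.exp (Polynomial R)))
      = (k.factorial : ℚ)⁻¹ • s k)
    (W : PowerSeries R) (hW0 : PowerSeries.constantCoeff (R := R) W = 0)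
    (hW : substPS (PowerSeries.X * substPS B (PowerSeries.exp R)) W = PowerSeries.X) :
    ∀ k : ℕ,
      (k.factorial : ℚ)⁻¹ • (s k).comp (Polynomial.X - Polynomial.C (k : R)) =
      PowerSeries.coeff (R := Polynomial R) k
        (PowerSeries.map Polynomial.C
            (substPS W A *
              PowerSeries.invOfUnit
                (1 + W * substPS W (PowerSeries.derivativeFun B)) 1) *
          substPS
            (PowerSeries.C (R := Polynomial R) Polynomial.X *
              PowerSeries.map Polynomial.C (substPS W B))
            (PowerSeries.exp (Polynomial R))) := by
  intro k
  set dB : PowerSeries R := PowerSeries.derivativeFun B with hdBdef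
  set E : PowerSeries R := substPS B (PowerSeries.exp R) with hEdef
  set F : PowerSeries R := PowerSeries.X * E with hFdef
  set V : PowerSeries R := PowerSeries.invOfUnit E 1 with hVdef
  set Z : PowerSeries R := 1 + W * substPS W dB with hZdef
  set Z2 : PowerSeries R := 1 + PowerSeries.X * dB with hZ2def
  set Y : PowerSeries R := PowerSeries.invOfUnit Z2 1 with hYdef
  have hE1 : PowerSeries.constantCoeff (R := R) E = 1 := constantCoeff_substPS_exp hB0
  have hEV : E * V = 1 := PowerSeries.mul_invOfUnit E 1 (by rw [hE1, Units.val_one])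
  have hF0 : PowerSeries.constantCoeff (R := R) F = 0 := by
    rw [hFdef, map_mul, PowerSeries.constantCoeff_X, zero_mul]
  have hFW : substPS F W = PowerSeries.X := hW
  have hFp : PowerSeries.derivativeFun F = E * Z2 := by
    rw [hFdef, hZ2def, PowerSeries.derivativeFun_mul, smul_eq_mul, smul_eq_mul, hEdef,
      substPS_exp_deriv hB0, derivativeFun_X, mul_one, ← hdBdef]
    ring
  have hZ1 : PowerSeries.constantCoeff (R := R) Z = 1 := by
    rw [hZdef, map_add, map_one, map_mul, hW0, zero_mul, add_zero]
  have hZ21 : PowerSeries.constantCoeff (R := R) Z2 = 1 := by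
    rw [hZ2def, map_add, map_one, map_mul, PowerSeries.constantCoeff_X, zero_mul, add_zero]
  have hZY : Z2 * Y = 1 := PowerSeries.mul_invOfUnit Z2 1 (by rw [hZ21, Units.val_one])
  have hZinv : Z * PowerSeries.invOfUnit Z 1 = 1 :=
    PowerSeries.mul_invOfUnit Z 1 (by rw [hZ1, Units.val_one])
  have hFZ : substPS F Z = Z2 := by
    rw [hZdef, hZ2def, substPS_add hF0, substPS_one hF0, substPS_mul hF0, hFW,
      substPS_assoc hW0 hF0, hFW, substPS_id]
  have hFinvZ : substPS F (PowerSeries.invOfUnit Z 1) = Y := by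
    have h1 : Z2 * substPS F (PowerSeries.invOfUnit Z 1) = 1 := by
      rw [← hFZ, ← substPS_mul hF0, hZinv, substPS_one hF0]
    exact mul_eq_one_unique h1 hZY
  have hFA : substPS F (substPS W A) = A := by
    rw [substPS_assoc hW0 hF0, hFW, substPS_id]
  have hFB : substPS F (substPS W B) = B := by
    rw [substPS_assoc hW0 hF0, hFW, substPS_id]
  have hEkVk : E ^ k * V ^ k = 1 := by rw [← mul_pow, hEV, one_pow]
  -- polynomial-side preliminaries
  have hCalg : ∀ q : ℚ, (Polynomial.C : R →+* Polynomial R) (algebraMap ℚ R q)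
      = algebraMap ℚ (Polynomial R) q := fun q => (Polynomial.algebraMap_apply q).symm
  have hmapexpC : PowerSeries.map (Polynomial.C : R →+* Polynomial R) (PowerSeries.exp R)
      = PowerSeries.exp (Polynomial R) := map_exp_of _ hCalg
  have hmc0 : ∀ g : PowerSeries R, PowerSeries.constantCoeff (R := R) g = 0 →
      PowerSeries.constantCoeff (R := Polynomial R)
        (PowerSeries.map (Polynomial.C : R →+* Polynomial R) g) = 0 := by
    intro g hg
    rw [← PowerSeries.coeff_zero_eq_constantCoeff_apply, PowerSeries.coeff_map,
      PowerSeries.coeff_zero_eq_constantCoeff_apply, hg, map_zero]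
  set Gp : PowerSeries (Polynomial R) :=
    PowerSeries.C (R := Polynomial R) Polynomial.X * PowerSeries.map Polynomial.C B with hGpdef
  set EXB : PowerSeries (Polynomial R) := substPS Gp (PowerSeries.exp (Polynomial R)) with hEXB
  have hGp0 : PowerSeries.constantCoeff (R := Polynomial R) Gp = 0 := by
    rw [hGpdef, map_mul, PowerSeries.constantCoeff_C, hmc0 B hB0, mul_zero]
  -- the composition ring hom
  set φk : Polynomial R →+* Polynomial R :=
    Polynomial.eval₂RingHom (Polynomial.C : R →+* Polynomial R)
      (Polynomial.X - Polynomial.C (k : R)) with hφkdef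
  have hφkC : ∀ r : R, φk (Polynomial.C r) = Polynomial.C r := fun r => by
    simp [hφkdef]

  have hφkalg : ∀ q : ℚ, φk (algebraMap ℚ (Polynomial R) q) = algebraMap ℚ (Polynomial R) q := by
    intro q
    rw [Polynomial.algebraMap_apply, hφkC, ← Polynomial.algebraMap_apply]
  have hφkX : φk Polynomial.X = Polynomial.X - Polynomial.C (k : R) := by
    simp [hφkdef]
  have hmapfix : ∀ g : PowerSeries R,
      PowerSeries.map φk (PowerSeries.map Polynomial.C g) = PowerSeries.map Polynomial.C g := by
    intro g
    ext n : 1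
    simp only [PowerSeries.coeff_map]
    exact hφkC _
  -- LHS computation
  have hmapser : PowerSeries.map φk (PowerSeries.map Polynomial.C A * EXB)
      = PowerSeries.map Polynomial.C A *
        substPS (PowerSeries.C (R := Polynomial R) (Polynomial.X - Polynomial.C (k : R)) *
          PowerSeries.map Polynomial.C B) (PowerSeries.exp (Polynomial R)) := by
    rw [map_mul]
    congr 1
    · exact hmapfix A
    · rw [hEXB, substPS_map φk hGp0, map_exp_of φk hφkalg, hGpdef, map_mul,
        PowerSeries.map_C, hφkX, hmapfix B]
  have hcomp : φk (s k) = (s k).comp (Polynomial.X - Polynomial.C (k : R)) := rfl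
  have hLHS1 : (k.factorial : ℚ)⁻¹ • (s k).comp (Polynomial.X - Polynomial.C (k : R))
      = PowerSeries.coeff (R := Polynomial R) k (PowerSeries.map Polynomial.C A *
          substPS (PowerSeries.C (R := Polynomial R) (Polynomial.X - Polynomial.C (k : R)) *
            PowerSeries.map Polynomial.C B) (PowerSeries.exp (Polynomial R))) := by
    have h2 : φk ((k.factorial : ℚ)⁻¹ • s k)
        = (k.factorial : ℚ)⁻¹ • (s k).comp (Polynomial.X - Polynomial.C (k : R)) := by
      rw [Algebra.smul_def, map_mul, hφkalg, ← Algebra.smul_def, hcomp]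
    calc (k.factorial : ℚ)⁻¹ • (s k).comp (Polynomial.X - Polynomial.C (k : R))
        = φk ((k.factorial : ℚ)⁻¹ • s k) := h2.symm
      _ = φk (PowerSeries.coeff (R := Polynomial R) k (PowerSeries.map Polynomial.C A * EXB)) := by
          rw [hs k]
      _ = PowerSeries.coeff (R := Polynomial R) k
            (PowerSeries.map φk (PowerSeries.map Polynomial.C A * EXB)) := by
          rw [PowerSeries.coeff_map]
      _ = _ := by rw [hmapser]
  -- split the shifted exponent
  have hNk0 : PowerSeries.constantCoeff (R := R) (PowerSeries.C (R := R) (-(k : R)) * B) = 0 := by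
    rw [map_mul, PowerSeries.constantCoeff_C, hB0, mul_zero]
  have hmcNk0 : PowerSeries.constantCoeff (R := Polynomial R)
      (PowerSeries.map (Polynomial.C : R →+* Polynomial R) (PowerSeries.C (R := R) (-(k : R)) * B)) = 0 :=
    hmc0 _ hNk0
  have hsplitG : PowerSeries.C (R := Polynomial R) (Polynomial.X - Polynomial.C (k : R)) *
        PowerSeries.map Polynomial.C B
      = Gp + PowerSeries.map Polynomial.C (PowerSeries.C (R := R) (-(k : R)) * B) := by
    rw [map_mul, PowerSeries.map_C, hGpdef]
    have hx : (Polynomial.X - Polynomial.C (k : R))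
        = Polynomial.X + Polynomial.C (-(k : R)) := by rw [map_neg]; ring
    rw [hx, map_add, add_mul]
  have hnegVk : substPS (PowerSeries.C (R := R) (-(k : R)) * B) (PowerSeries.exp R) = V ^ k := by
    have hneg := substPS_negmul_exp hB0 k
    rw [← hEdef] at hneg
    exact mul_eq_one_unique (by rw [mul_comm]; exact hneg) hEkVk
  have hexp_split : substPS (PowerSeries.C (R := Polynomial R) (Polynomial.X - Polynomial.C (k : R)) *
        PowerSeries.map Polynomial.C B) (PowerSeries.exp (Polynomial R))
      = EXB * PowerSeries.map Polynomial.C (V ^ k) := by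
    rw [hsplitG, substPS_exp_add hGp0 hmcNk0, hEXB]
    congr 1
    rw [← hmapexpC, ← substPS_map Polynomial.C hNk0, hnegVk]
  -- RHS computation via the key lemma
  have hmapB0 : PowerSeries.constantCoeff (R := Polynomial R)
      (PowerSeries.map (Polynomial.C : R →+* Polynomial R) B) = 0 := hmc0 B hB0
  set RHSser : PowerSeries (Polynomial R) :=
    PowerSeries.map Polynomial.C (substPS W A * PowerSeries.invOfUnit Z 1) *
      substPS (PowerSeries.C (R := Polynomial R) Polynomial.X *
        PowerSeries.map Polynomial.C (substPS W B)) (PowerSeries.exp (Polynomial R))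
    with hRHSdef
  have hkey := key_lagrange (S := Polynomial R) hmapB0 RHSser k
  have hEs : substPS (PowerSeries.map Polynomial.C B) (PowerSeries.exp (Polynomial R))
      = PowerSeries.map Polynomial.C E := by
    rw [hEdef, ← hmapexpC, ← substPS_map Polynomial.C hB0]
  have hdermap : PowerSeries.derivativeFun (PowerSeries.map (Polynomial.C : R →+* Polynomial R) F)
      = PowerSeries.map Polynomial.C (PowerSeries.derivativeFun F) := derivativeFun_map _ F
  have hVs : PowerSeries.invOfUnit (PowerSeries.map (Polynomial.C : R →+* Polynomial R) E) 1
      = PowerSeries.map Polynomial.C V := by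
    have hcE : PowerSeries.constantCoeff (R := Polynomial R)
        (PowerSeries.map (Polynomial.C : R →+* Polynomial R) E) = 1 := by
      rw [← PowerSeries.coeff_zero_eq_constantCoeff_apply, PowerSeries.coeff_map,
        PowerSeries.coeff_zero_eq_constantCoeff_apply, hE1, map_one]
    have h1 : PowerSeries.map (Polynomial.C : R →+* Polynomial R) E *
        PowerSeries.invOfUnit (PowerSeries.map (Polynomial.C : R →+* Polynomial R) E) 1 = 1 :=
      PowerSeries.mul_invOfUnit _ 1 (by rw [hcE, Units.val_one])
    have h2 : PowerSeries.map (Polynomial.C : R →+* Polynomial R) E *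
        PowerSeries.map Polynomial.C V = 1 := by
      rw [← map_mul, hEV, map_one]
    exact mul_eq_one_unique h1 h2
  rw [hEs] at hkey
  have hFsmap : PowerSeries.X * PowerSeries.map (Polynomial.C : R →+* Polynomial R) E
      = PowerSeries.map Polynomial.C F := by
    rw [hFdef, map_mul, PowerSeries.map_X]
  rw [hFsmap, hVs] at hkey
  -- compute substPS (map C F) RHSser
  have hconstmapF : PowerSeries.constantCoeff (R := Polynomial R)
      (PowerSeries.map (Polynomial.C : R →+* Polynomial R) F) = 0 := hmc0 F hF0
  have hGw0 : PowerSeries.constantCoeff (R := Polynomial R)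
      (PowerSeries.C (R := Polynomial R) Polynomial.X *
        PowerSeries.map Polynomial.C (substPS W B)) = 0 := by
    rw [map_mul, PowerSeries.constantCoeff_C,
      hmc0 _ (by rw [constantCoeff_substPS hW0, hB0]), mul_zero]
  have hsubstRHS : substPS (PowerSeries.map Polynomial.C F) RHSser
      = PowerSeries.map Polynomial.C (A * Y) * EXB := by
    rw [hRHSdef, substPS_mul hconstmapF]
    congr 1
    · have hin : substPS F (substPS W A * PowerSeries.invOfUnit Z 1) = A * Y := by
        rw [substPS_mul hF0, hFA, hFinvZ]
      rw [← substPS_map Polynomial.C hF0, hin]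
    · rw [substPS_assoc hGw0 hconstmapF]
      have hin2 : substPS (PowerSeries.map Polynomial.C F)
          (PowerSeries.C (R := Polynomial R) Polynomial.X *
            PowerSeries.map Polynomial.C (substPS W B)) = Gp := by
        rw [substPS_mul hconstmapF, substPS_C hconstmapF, ← substPS_map Polynomial.C hF0, hFB,
          hGpdef]
      rw [hin2, hEXB]
  -- final RHS simplification
  have hRHSfinal : PowerSeries.coeff (R := Polynomial R) k RHSser
      = PowerSeries.coeff (R := Polynomial R) k (PowerSeries.map Polynomial.C A *
          (EXB * PowerSeries.map Polynomial.C (V ^ k))) := by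
    rw [hkey, hsubstRHS, hdermap, hFp]
    refine congrArg _ ?_
    have harr : (A * Y) * ((E * Z2) * V ^ (k + 1)) = (A * V ^ k) * ((Z2 * Y) * (E * V)) := by
      ring
    have e : PowerSeries.map (Polynomial.C : R →+* Polynomial R) (A * Y) *
          (PowerSeries.map Polynomial.C (E * Z2) * PowerSeries.map Polynomial.C (V ^ (k + 1)))
        = PowerSeries.map Polynomial.C A * PowerSeries.map Polynomial.C (V ^ k) := by
      rw [← map_mul, ← map_mul, harr, hZY, hEV, mul_one, mul_one, map_mul]
    calc PowerSeries.map (Polynomial.C : R →+* Polynomial R) (A * Y) * EXB *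
          (PowerSeries.map Polynomial.C (E * Z2) * PowerSeries.map Polynomial.C V ^ (k + 1))
        = PowerSeries.map (Polynomial.C : R →+* Polynomial R) (A * Y) *
            (PowerSeries.map Polynomial.C (E * Z2) *
              PowerSeries.map Polynomial.C (V ^ (k + 1))) * EXB := by
          rw [map_pow]
          ring
      _ = PowerSeries.map Polynomial.C A * PowerSeries.map Polynomial.C (V ^ k) * EXB := by
          rw [e]
      _ = PowerSeries.map Polynomial.C A * (EXB * PowerSeries.map Polynomial.C (V ^ k)) := by
          ring
  rw [hLHS1, hexp_split, hRHSfinal]
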